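/- There exists a constant C, depending only on ρ₀, such that for all integers m ≥ 0 and all 0 ≤ j ≤ ⌊m/2⌋, (m!/(j!(m−j)!)) · N_{ρ,m+1}/(N_{ρ,j+3}·N_{ρ,m−j+1}) ≤ C/(j+1). -/
import Mathlib


open MeasureTheory Real Filter

noncomputable section

namespace HypP

/-- Japanese bracket `⟨y⟩ = (1+y²)^{1/2}`. -/
def br (y : ℝ) : ℝ := Real.sqrt (1 + y ^ 2)

/-- Weighting a function of `(x,y)` by `⟨y⟩^e`. -/
def wt (e : ℝ) (g : ℝ → ℝ → ℝ) : ℝ → ℝ → ℝ := fun x y => br y ^ e * g x y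

/-- `m`-th tangential derivative `∂ₓ^m`. -/
def Dx (m : ℕ) (g : ℝ → ℝ → ℝ) : ℝ → ℝ → ℝ :=
  fun x y => iteratedDeriv m (fun x' => g x' y) x

/-- `k`-th normal derivative `∂_y^k`. -/
def Dy (k : ℕ) (g : ℝ → ℝ → ℝ) : ℝ → ℝ → ℝ :=
  fun x y => iteratedDeriv k (fun y' => g x y') y

/-- Squared `L²` norm on the half-plane `ℝ × (0,∞)`. -/
def sqL2 (g : ℝ → ℝ → ℝ) : ℝ := ∫ x : ℝ, ∫ y in Set.Ioi (0 : ℝ), (g x y) ^ 2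

/-- `L²` inner product on the half-plane. -/
def ipL2 (f g : ℝ → ℝ → ℝ) : ℝ := ∫ x : ℝ, ∫ y in Set.Ioi (0 : ℝ), f x y * g x y

/-- Squared `L²ₓL^∞_y` norm on the half-plane. -/
def sqL2xLinfy (g : ℝ → ℝ → ℝ) : ℝ :=
  ∫ x : ℝ, (sSup ((fun y => |g x y|) '' Set.Ioi (0 : ℝ))) ^ 2

/-- The weight `H_{ρ,m,k}`. -/
def Hc (ρ : ℝ) (m k : ℕ) : ℝ :=
  ρ ^ (m + k + 1) * ((m : ℝ) + (k : ℝ) + 1) ^ 9 /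
    (((m + k).factorial : ℝ) * Real.sqrt (m.factorial : ℝ))

/-- The weight `N_{ρ,m} = H_{ρ,m,0}`. -/
def Nc (ρ : ℝ) (m : ℕ) : ℝ := Hc ρ m 0

/-- The weight `L_{ρ,k} = H_{ρ,1,k}`. -/
def Lc (ρ : ℝ) (k : ℕ) : ℝ := Hc ρ 1 k

/-- Squared anisotropic Gevrey norm `‖h‖²_{G^{3/2,1}_{ρ,ℓ}}`. -/
def gevSq (ρ ℓ : ℝ) (h : ℝ → ℝ → ℝ) : ℝ :=
  (∑' m : ℕ, (Nc ρ m * Real.sqrt (sqL2 (wt (ℓ - 1) (Dx m h)))) ^ 2)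
  + ∑' m : ℕ, ∑' k : ℕ,
      (((m : ℝ) + 1) * Hc ρ (m + 1) k *
        Real.sqrt (sqL2 (wt ℓ (Dx m (Dy (k + 1) h))))) ^ 2

/-- Anisotropic Gevrey norm. -/
def gevNorm (ρ ℓ : ℝ) (h : ℝ → ℝ → ℝ) : ℝ := Real.sqrt (gevSq ρ ℓ h)

/-- Membership in the anisotropic Gevrey space `G^{3/2,1}_{ρ,ℓ}`. -/
def InGev (ρ ℓ : ℝ) (h : ℝ → ℝ → ℝ) : Prop :=
  Summable (fun m : ℕ => (Nc ρ m * Real.sqrt (sqL2 (wt (ℓ - 1) (Dx m h)))) ^ 2) ∧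
  Summable (fun p : ℕ × ℕ =>
    (((p.1 : ℝ) + 1) * Hc ρ (p.1 + 1) p.2 *
      Real.sqrt (sqL2 (wt ℓ (Dx p.1 (Dy (p.2 + 1) h))))) ^ 2)

/-- Time derivative `∂ₜ`. -/
def pt (u : ℝ → ℝ → ℝ → ℝ) : ℝ → ℝ → ℝ → ℝ := fun t x y => deriv (fun s => u s x y) t

/-- Tangential derivative `∂ₓ` (time-dependent functions). -/
def px (u : ℝ → ℝ → ℝ → ℝ) : ℝ → ℝ → ℝ → ℝ := fun t x y => deriv (fun x' => u t x' y) x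

/-- Normal derivative `∂_y` (time-dependent functions). -/
def py (u : ℝ → ℝ → ℝ → ℝ) : ℝ → ℝ → ℝ → ℝ := fun t x y => deriv (fun y' => u t x y') y

/-- The normal velocity `v(t,x,y) = -∫₀^y ∂ₓu(t,x,ỹ) dỹ`. -/
def vv (u : ℝ → ℝ → ℝ → ℝ) : ℝ → ℝ → ℝ → ℝ :=
  fun t x y => -∫ s in (0 : ℝ)..y, px u t x s

/-- The auxiliary function `φ = ∂ₜu + u∂ₓu + v∂_yu`. -/
def phi (u : ℝ → ℝ → ℝ → ℝ) : ℝ → ℝ → ℝ → ℝ :=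
  fun t x y => pt u t x y + u t x y * px u t x y + vv u t x y * py u t x y

/-- `u` solves the 2D hyperbolic Prandtl system on `[0,T]`, with the no-slip boundary
condition and decay of `u` at `y → ∞`. -/
def Solves (u : ℝ → ℝ → ℝ → ℝ) (T : ℝ) : Prop :=
  (∀ t ∈ Set.Icc (0 : ℝ) T, ∀ x : ℝ, ∀ y ∈ Set.Ioi (0 : ℝ),
      pt (pt u) t x y + pt u t x y
        + u t x y * px u t x y + vv u t x y * py u t x y
        + pt (fun t' x' y' => u t' x' y' * px u t' x' y' + vv u t' x' y' * py u t' x' y') t x y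
        - py (py u) t x y = 0)
  ∧ (∀ t ∈ Set.Icc (0 : ℝ) T, ∀ x : ℝ, u t x 0 = 0)
  ∧ (∀ t ∈ Set.Icc (0 : ℝ) T, ∀ x : ℝ, Tendsto (fun y => u t x y) atTop (nhds 0))

/-- `U` is the auxiliary function `𝒰` solving
`(∂ₜ + u∂ₓ + v∂_y)∫₀^y 𝒰 dỹ = -∂ₓv`, `𝒰|_{t=0} = 0`. -/
def AuxU (u U : ℝ → ℝ → ℝ → ℝ) (T : ℝ) : Prop :=
  (∀ t ∈ Set.Icc (0 : ℝ) T, ∀ x : ℝ, ∀ y ∈ Set.Ioi (0 : ℝ),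
      pt (fun t' x' y' => ∫ s in (0 : ℝ)..y', U t' x' s) t x y
        + u t x y * px (fun t' x' y' => ∫ s in (0 : ℝ)..y', U t' x' s) t x y
        + vv u t x y * py (fun t' x' y' => ∫ s in (0 : ℝ)..y', U t' x' s) t x y
        = -px (vv u) t x y)
  ∧ (∀ x : ℝ, ∀ y : ℝ, U 0 x y = 0)

/-- The auxiliary function `λ = ∂ₓu - (∂_yu)∫₀^y 𝒰 dỹ`. -/
def lam (u U : ℝ → ℝ → ℝ → ℝ) : ℝ → ℝ → ℝ → ℝ :=
  fun t x y => px u t x y - py u t x y * ∫ s in (0 : ℝ)..y, U t x s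

/-- `|a|²_{X_ρ}` for a time slice `a = (us, Us, ls, fs)` of `(u, 𝒰, λ, φ)`. -/
def Xsq (ρ ℓ : ℝ) (us Us ls fs : ℝ → ℝ → ℝ) : ℝ :=
  (∑' m : ℕ, (Nc ρ (m + 1)) ^ 2 * sqL2 (Dx m Us))
  + (∑' m : ℕ, ((m : ℝ) + 1) * (Nc ρ (m + 1)) ^ 2 * sqL2 (wt (ℓ - 1) (Dx m ls)))
  + ∑' m : ℕ, ∑' k : ℕ, ((m : ℝ) + 1) ^ 2 * (Hc ρ (m + 1) k) ^ 2 *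
      (sqL2 (wt ℓ (Dx m (Dy k fs))) + sqL2 (wt ℓ (Dx m (Dy (k + 1) us))))

/-- `|a|²_{Y_ρ}` for a time slice `a = (us, Us, ls, fs)` of `(u, 𝒰, λ, φ)`. -/
def Ysq (ρ ℓ : ℝ) (us Us ls fs : ℝ → ℝ → ℝ) : ℝ :=
  (∑' m : ℕ, ((m : ℝ) + 1) * (Nc ρ (m + 1)) ^ 2 * sqL2 (Dx m Us))
  + (∑' m : ℕ, ((m : ℝ) + 1) ^ 2 * (Nc ρ (m + 1)) ^ 2 * sqL2 (wt (ℓ - 1) (Dx m ls)))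
  + ∑' m : ℕ, ∑' k : ℕ, ((m : ℝ) + (k : ℝ) + 1) * ((m : ℝ) + 1) ^ 2 * (Hc ρ (m + 1) k) ^ 2 *
      (sqL2 (wt ℓ (Dx m (Dy k fs))) + sqL2 (wt ℓ (Dx m (Dy (k + 1) us))))

/-- `|a|_{X_ρ}`. -/
def Xnorm (ρ ℓ : ℝ) (us Us ls fs : ℝ → ℝ → ℝ) : ℝ := Real.sqrt (Xsq ρ ℓ us Us ls fs)

/-- `|a|_{Y_ρ}`. -/
def Ynorm (ρ ℓ : ℝ) (us Us ls fs : ℝ → ℝ → ℝ) : ℝ := Real.sqrt (Ysq ρ ℓ us Us ls fs)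

end HypP

open HypP


lemma two_pow_le_centralBinom (n : ℕ) : 2 ^ n ≤ Nat.centralBinom n := by
  induction n with
  | zero => simp [Nat.centralBinom]
  | succ n ih =>
    have h := Nat.succ_mul_centralBinom_succ n
    have h2 : (n+1) * (2 * Nat.centralBinom n) ≤ (n+1) * Nat.centralBinom (n+1) := by
      rw [h]; nlinarith [Nat.centralBinom_pos n]
    have h3 : 2 * Nat.centralBinom n ≤ Nat.centralBinom (n+1) :=
      Nat.le_of_mul_le_mul_left h2 (Nat.succ_pos n)
    calc 2 ^ (n+1) = 2 * 2 ^ n := by ring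
    _ ≤ 2 * Nat.centralBinom n := by omega
    _ ≤ _ := h3

lemma two_pow_le_choose {j b : ℕ} (h : j ≤ b) : 2 ^ j ≤ (j + b).choose j := by
  calc 2 ^ j ≤ Nat.centralBinom j := two_pow_le_centralBinom j
  _ = (j + j).choose j := by rw [Nat.centralBinom, two_mul]
  _ ≤ (j + b).choose j := Nat.choose_le_choose j (by omega)

lemma poly_bd (j : ℕ) : ((j:ℝ)+3)^11 ≤ (3^11 * 2^12 * 39916800) * 2^j := by
  have hlog : (1/2 : ℝ) ≤ Real.log 2 := by
    have := Real.log_two_gt_d9; linarith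
  set x : ℝ := ((j:ℝ)+1) * Real.log 2 with hx
  have hx0 : 0 ≤ x := by positivity
  have h1 : x ^ 11 / (Nat.factorial 11 : ℝ) ≤ Real.exp x := by
    calc x ^ 11 / (Nat.factorial 11 : ℝ)
        ≤ ∑ i ∈ Finset.range 12, x ^ i / i.factorial := by
          have hmem : (11:ℕ) ∈ Finset.range 12 := by norm_num
          exact Finset.single_le_sum (f := fun i => x ^ i / (i.factorial : ℝ))
            (fun i _ => by positivity) hmem
    _ ≤ Real.exp x := Real.sum_le_exp_of_nonneg hx0 12
  have h2 : Real.exp x = 2 ^ (j+1) := by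
    have : x = ((j+1 : ℕ) : ℝ) * Real.log 2 := by push_cast; ring
    rw [this, Real.exp_nat_mul, Real.exp_log (by norm_num)]
  have hfac : (Nat.factorial 11 : ℝ) = 39916800 := by norm_num [Nat.factorial]
  have h3 : (((j:ℝ)+1) * (1/2)) ^ 11 ≤ x ^ 11 := by
    rw [hx]
    gcongr <;> first | positivity | linarith
  have h4 : ((j:ℝ)+1) ^ 11 ≤ 2^11 * 39916800 * 2 ^ (j+1) := by
    have := h1
    rw [h2, hfac] at this
    have e : (((j:ℝ)+1) * (1/2)) ^ 11 = ((j:ℝ)+1)^11 / 2^11 := by ring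
    rw [e] at h3
    have h5 : ((j:ℝ)+1)^11 / 2^11 / 39916800 ≤ 2 ^ (j+1) := le_trans (by gcongr) this
    have h2p : (0:ℝ) < 2^11 := by positivity
    nlinarith [h5]
  have h6 : ((j:ℝ)+3)^11 ≤ 3^11 * ((j:ℝ)+1)^11 := by
    calc ((j:ℝ)+3)^11 ≤ (3*((j:ℝ)+1))^11 := by gcongr <;> first | positivity | linarith
    _ = 3^11 * ((j:ℝ)+1)^11 := by ring
  calc ((j:ℝ)+3)^11 ≤ 3^11 * (2^11 * 39916800 * 2 ^ (j+1)) := by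
        refine h6.trans ?_; gcongr
  _ = (3^11 * 2^12 * 39916800) * 2^j := by ring

set_option maxHeartbeats 2000000 in
lemma alg_helper (j b : ℕ) (ρ u v w fj fb fm : ℝ) (hρ : ρ ≠ 0) (hfj : fj ≠ 0)
    (hfb : fb ≠ 0) (hfm : fm ≠ 0) (hv : v ≠ 0) (hw : w ≠ 0) :
    fm ^ 2 / (fj ^ 2 * fb ^ 2) *
      ((ρ ^ (j + b + 1 + 1)) ^ 2 * u ^ 2 / (((j:ℝ)+(b:ℝ)+1) * fm) ^ 3 /
        ((ρ ^ (j + 3 + 1)) ^ 2 * v ^ 2 / ((((j:ℝ)+3) * (((j:ℝ)+2) * (((j:ℝ)+1) * fj))) ^ 3) *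
          ((ρ ^ (b + 1 + 1)) ^ 2 * w ^ 2 / ((((b:ℝ)+1) * fb) ^ 3))))
    = (((j:ℝ)+1) * ((j:ℝ)+2) * ((j:ℝ)+3) * (((b:ℝ)+1) / (((j:ℝ)+(b:ℝ)+1)))) ^ 3 *
        (fj * fb / fm) * (u ^ 2 / (v ^ 2 * w ^ 2)) * (1 / ρ ^ 8) := by
  have hjb1 : ((j:ℝ)+(b:ℝ)+1) ≠ 0 := by positivity
  field_simp
  ring

set_option maxHeartbeats 4000000 in
/-- estimate (3.3): for `j ≤ ⌊m/2⌋`,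
`(m!/(j!(m−j)!)) · N_{ρ,m+1}/(N_{ρ,j+3}N_{ρ,m−j+1}) ≤ C/(j+1)`. -/
theorem weight_estimate_fe1 (ρ₀ : ℝ) (hρ₀ : 0 < ρ₀) :
    ∃ C : ℝ, 0 < C ∧
      ∀ ρ : ℝ, (Real.exp 1)⁻¹ * ρ₀ ≤ ρ → ρ ≤ ρ₀ →
        ∀ m j : ℕ, j ≤ m / 2 →
          (m.factorial : ℝ) / ((j.factorial : ℝ) * ((m - j).factorial : ℝ))
              * (Nc ρ (m + 1) / (Nc ρ (j + 3) * Nc ρ (m - j + 1)))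
            ≤ C / ((j : ℝ) + 1) := by
  classical
  set K : ℝ := 3 ^ 11 * 2 ^ 12 * 39916800 with hK
  have hKpos : (0:ℝ) < K := by norm_num [hK]
  refine ⟨Real.exp 1 ^ 4 / ρ₀ ^ 4 * Real.sqrt K, by positivity, ?_⟩
  intro ρ hρl hρu m j hj
  have hρ : 0 < ρ := lt_of_lt_of_le (by positivity) hρl
  obtain ⟨b, rfl⟩ : ∃ b, m = j + b := ⟨m - j, by omega⟩
  have hjb : j ≤ b := by omega
  simp only [Nat.add_sub_cancel_left]
  have hNc2 : ∀ n : ℕ, (Nc ρ n) ^ 2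
      = (ρ ^ (n+1)) ^ 2 * (((n:ℝ)+1) ^ 9) ^ 2 / ((n.factorial : ℝ)) ^ 3 := by
    intro n
    have h0 : (0:ℝ) ≤ (n.factorial : ℝ) := by positivity
    simp only [Nc, Hc, Nat.add_zero, Nat.cast_zero, add_zero]
    rw [div_pow, mul_pow, mul_pow, Real.sq_sqrt h0]
    ring
  have hfjpos : (0:ℝ) < (j.factorial : ℝ) := by exact_mod_cast Nat.factorial_pos j
  have hfbpos : (0:ℝ) < (b.factorial : ℝ) := by exact_mod_cast Nat.factorial_pos b
  have hfmpos : (0:ℝ) < ((j+b).factorial : ℝ) := by exact_mod_cast Nat.factorial_pos (j+b)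
  have hfj3 : ((j+3).factorial : ℝ)
      = ((j:ℝ)+3) * (((j:ℝ)+2) * (((j:ℝ)+1) * (j.factorial : ℝ))) := by
    rw [show j+3 = (j+2)+1 from rfl, Nat.factorial_succ, show j+2 = (j+1)+1 from rfl,
      Nat.factorial_succ, Nat.factorial_succ]
    push_cast; ring
  have hfb1 : ((b+1).factorial : ℝ) = ((b:ℝ)+1) * (b.factorial : ℝ) := by
    rw [Nat.factorial_succ]; push_cast; ring
  have hfm1 : ((j+b+1).factorial : ℝ) = ((j:ℝ)+(b:ℝ)+1) * ((j+b).factorial : ℝ) := by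
    rw [Nat.factorial_succ]; push_cast; ring
  set u : ℝ := (((j+b+1 : ℕ) : ℝ)+1) ^ 9 with hu
  set v : ℝ := (((j+3 : ℕ) : ℝ)+1) ^ 9 with hv
  set w : ℝ := (((b+1 : ℕ) : ℝ)+1) ^ 9 with hw
  have hupos : 0 < u := by rw [hu]; positivity
  have hvpos : 0 < v := by rw [hv]; positivity
  have hwpos : 0 < w := by rw [hw]; positivity
  set P : ℝ := ((j:ℝ)+1) * ((j:ℝ)+2) * ((j:ℝ)+3) * (((b:ℝ)+1) / (((j:ℝ)+(b:ℝ)+1))) with hP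
  set Q : ℝ := ((j:ℝ)+1) * ((j:ℝ)+2) * ((j:ℝ)+3) with hQ
  have hQpos : 0 < Q := by rw [hQ]; positivity
  have hPpos : 0 < P := by rw [hP]; positivity
  set L : ℝ := ((j+b).factorial : ℝ) / ((j.factorial : ℝ) * (b.factorial : ℝ))
      * (Nc ρ (j+b+1) / (Nc ρ (j+3) * Nc ρ (b+1))) with hL
  have hL2 : L ^ 2 = P ^ 3 * ((j.factorial : ℝ) * (b.factorial : ℝ) / ((j+b).factorial : ℝ))
      * (u ^ 2 / (v ^ 2 * w ^ 2)) * (1 / ρ ^ 8) := by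
    rw [hL, mul_pow, div_pow, mul_pow, div_pow, mul_pow, hNc2, hNc2, hNc2, hfm1, hfj3, hfb1,
      hP, hu, hv, hw]
    exact alg_helper j b ρ _ _ _ _ _ _ (ne_of_gt hρ) (ne_of_gt hfjpos) (ne_of_gt hfbpos)
      (ne_of_gt hfmpos) (by positivity) (by positivity)
  have hPQ : P ≤ Q := by
    rw [hP, hQ]
    have h1 : ((b:ℝ)+1) / (((j:ℝ)+(b:ℝ)+1)) ≤ 1 := by
      rw [div_le_one (by positivity)]
      have := (Nat.cast_nonneg j : (0:ℝ) ≤ j); linarith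
    calc ((j:ℝ)+1) * ((j:ℝ)+2) * ((j:ℝ)+3) * (((b:ℝ)+1) / (((j:ℝ)+(b:ℝ)+1)))
        ≤ ((j:ℝ)+1) * ((j:ℝ)+2) * ((j:ℝ)+3) * 1 := by gcongr
    _ = _ := by ring
  have hcb : (j.factorial : ℝ) * (b.factorial : ℝ) / ((j+b).factorial : ℝ)
      ≤ 1 / 2 ^ j := by
    have h1 : (2:ℝ) ^ j ≤ ((j+b).factorial : ℝ) / ((j.factorial : ℝ) * (b.factorial : ℝ)) := by
      have hn := two_pow_le_choose hjb
      have hc : (((j+b).choose j : ℕ) : ℝ)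
          = ((j+b).factorial : ℝ) / ((j.factorial : ℝ) * (b.factorial : ℝ)) := by
        rw [Nat.cast_choose ℝ (by omega : j ≤ j + b), Nat.add_sub_cancel_left]
      calc (2:ℝ) ^ j = ((2 ^ j : ℕ) : ℝ) := by push_cast; ring
      _ ≤ (((j+b).choose j : ℕ) : ℝ) := by exact_mod_cast hn
      _ = _ := hc
    have h1' : (2:ℝ) ^ j * ((j.factorial : ℝ) * (b.factorial : ℝ)) ≤ ((j+b).factorial : ℝ) :=
      (le_div_iff₀ (by positivity)).mp h1
    rw [div_le_div_iff₀ hfmpos (by positivity : (0:ℝ) < 2 ^ j)]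
    calc (j.factorial : ℝ) * (b.factorial : ℝ) * 2 ^ j
        = 2 ^ j * ((j.factorial : ℝ) * (b.factorial : ℝ)) := by ring
    _ ≤ ((j+b).factorial : ℝ) := h1'
    _ = 1 * ((j+b).factorial : ℝ) := by ring
  have hR : u ^ 2 / (v ^ 2 * w ^ 2) ≤ 1 := by
    have huvw : u ≤ v * w := by
      rw [hu, hv, hw, ← mul_pow]
      apply pow_le_pow_left₀ (by positivity)
      push_cast
      nlinarith [(Nat.cast_nonneg j : (0:ℝ) ≤ j), (Nat.cast_nonneg b : (0:ℝ) ≤ b)]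
    rw [div_le_one (by positivity), ← mul_pow]
    exact pow_le_pow_left₀ hupos.le huvw 2
  have hρ8 : 1 / ρ ^ 8 ≤ Real.exp 1 ^ 8 / ρ₀ ^ 8 := by
    have h1 : ((Real.exp 1)⁻¹ * ρ₀) ^ 8 ≤ ρ ^ 8 := pow_le_pow_left₀ (by positivity) hρl 8
    calc 1 / ρ ^ 8 ≤ 1 / ((Real.exp 1)⁻¹ * ρ₀) ^ 8 :=
          one_div_le_one_div_of_le (by positivity) h1
    _ = Real.exp 1 ^ 8 / ρ₀ ^ 8 := by
        rw [mul_pow, inv_pow]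
        field_simp
  have hQK : Q ^ 3 * (1 / 2 ^ j) ≤ K / (((j:ℝ)+1) ^ 2) := by
    have h11 : (((j:ℝ)+1) ^ 2) * Q ^ 3 ≤ K * 2 ^ j := by
      have h1 : (((j:ℝ)+1) ^ 2) * Q ^ 3 ≤ (((j:ℝ)+3) ^ 2) * (((j:ℝ)+3) ^ 3) ^ 3 := by
        rw [hQ]
        have hq3 : ((j:ℝ)+1) * ((j:ℝ)+2) * ((j:ℝ)+3) ≤ ((j:ℝ)+3) ^ 3 := by
          have := (Nat.cast_nonneg j : (0:ℝ) ≤ j)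
          nlinarith
        have hb1 : ((j:ℝ)+1) ^ 2 ≤ ((j:ℝ)+3) ^ 2 := by
          apply pow_le_pow_left₀ (by positivity) (by linarith)
        exact mul_le_mul hb1 (pow_le_pow_left₀ (by positivity) hq3 3) (by positivity)
          (by positivity)
      have h2 : (((j:ℝ)+3) ^ 2) * (((j:ℝ)+3) ^ 3) ^ 3 = ((j:ℝ)+3) ^ 11 := by ring
      rw [h2] at h1
      exact h1.trans (poly_bd j)
    rw [mul_one_div, div_le_div_iff₀ (by positivity : (0:ℝ) < 2 ^ j) (by positivity)]
    nlinarith [h11]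
  have hC2 : (Real.exp 1 ^ 4 / ρ₀ ^ 4 * Real.sqrt K / (((j:ℝ)+1))) ^ 2
      = Real.exp 1 ^ 8 / ρ₀ ^ 8 * (K / (((j:ℝ)+1) ^ 2)) := by
    rw [div_pow, mul_pow, Real.sq_sqrt hKpos.le, div_pow]
    ring
  have key : L ^ 2 ≤ (Real.exp 1 ^ 4 / ρ₀ ^ 4 * Real.sqrt K / (((j:ℝ)+1))) ^ 2 := by
    calc L ^ 2 = P ^ 3 * ((j.factorial : ℝ) * (b.factorial : ℝ) / ((j+b).factorial : ℝ))
        * (u ^ 2 / (v ^ 2 * w ^ 2)) * (1 / ρ ^ 8) := hL2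
    _ ≤ Q ^ 3 * (1 / 2 ^ j) * 1 * (Real.exp 1 ^ 8 / ρ₀ ^ 8) := by
        gcongr <;> first | exact hPQ | exact hcb | exact hR | exact hρ8 | positivity
    _ = Real.exp 1 ^ 8 / ρ₀ ^ 8 * (Q ^ 3 * (1 / 2 ^ j)) := by ring
    _ ≤ Real.exp 1 ^ 8 / ρ₀ ^ 8 * (K / (((j:ℝ)+1) ^ 2)) := by gcongr
    _ = _ := hC2.symm
  have hLfinal : L ≤ Real.exp 1 ^ 4 / ρ₀ ^ 4 * Real.sqrt K / (((j:ℝ)+1)) :=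
    le_of_pow_le_pow_left₀ (by norm_num) (by positivity) key
  exact hLfinal
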